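/- In a Radon plane (normalized so that the anti-norm equals the norm), the Minkowski length of a C² simple closed strictly convex curve γ containing the origin equals the integral of its Minkowski support function over one period: l(γ) = ∫₀^{l(S)} h_γ(u) du, where the parametrization satisfies γ'(u) = f(u)φ'(u) with f > 0 and φ the arc-length parametrization of the unit circle (a Cauchy-type formula). -/

import Mathlib

open MeasureTheory intervalIntegral Set

/-- Cauchy-type formula in a Radon plane: the Minkowski length of a closed convex
curve equals the integral of its Minkowski support function `h_γ(u) = ω(γ(u), φ'(u))`. -/
theorem length_eq_integral_support {X : Type*} [NormedAddCommGroup X] [NormedSpace ℝ X]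
    (hdim : Module.finrank ℝ X = 2)
    (ω : X →ₗ[ℝ] X →ₗ[ℝ] ℝ)
    (halt : ∀ x : X, ω x x = 0)
    (hnd : ∀ x : X, (∀ y : X, ω x y = 0) → x = 0)
    (L : ℝ) (hL : 0 < L)
    (φ φ' : ℝ → X)
    (hφderiv : ∀ t, HasDerivAt φ (φ' t) t)
    (hφper : ∀ t, φ (t + L) = φ t)
    (hφrange : Set.range φ = Metric.sphere (0 : X) 1)
    (hφinj : Set.InjOn φ (Set.Ico 0 L))
    (hφspeed : ∀ t, ‖φ' t‖ = 1)
    (hRadonNormalized : ∀ t, ω (φ t) (φ' t) = 1)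
    (γ γ' : ℝ → X) (f : ℝ → ℝ)
    (hγderiv : ∀ u, HasDerivAt γ (γ' u) u)
    (hγper : ∀ u, γ (u + L) = γ u)
    (hγinj : Set.InjOn γ (Set.Ico 0 L))
    (hf : ∀ u, 0 < f u)
    (htang : ∀ u, γ' u = f u • φ' u)
    (horig : (0 : X) ∈ interior (convexHull ℝ (Set.range γ))) :
    (∫ u in (0 : ℝ)..L, ‖γ' u‖) = ∫ u in (0 : ℝ)..L, ω (γ u) (φ' u) := by
  borelize X
  haveI : FiniteDimensional ℝ X := FiniteDimensional.of_finrank_eq_succ hdim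
  -- continuous bilinear version of ω
  obtain ⟨Bc, hBcapp⟩ : ∃ Bc : X →L[ℝ] X →L[ℝ] ℝ, ∀ x y, Bc x y = ω x y := by
    refine ⟨LinearMap.toContinuousLinearMap
      { toFun := fun x => LinearMap.toContinuousLinearMap (ω x),
        map_add' := fun x y => by ext z; simp,
        map_smul' := fun c x => by ext z; simp }, fun x y => by simp⟩
  -- antisymmetry of ω
  have hanti : ∀ x y : X, ω x y = - ω y x := by
    intro x y
    have h := halt (x + y)
    simp only [map_add, LinearMap.add_apply, halt] at h
    linarith
  -- the norm of γ' is f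
  have hnorm : ∀ u, ‖γ' u‖ = f u := by
    intro u
    rw [htang, norm_smul, hφspeed, mul_one, Real.norm_eq_abs, abs_of_pos (hf u)]
  -- continuity/measurability facts
  have hγcont : Continuous γ :=
    continuous_iff_continuousAt.2 fun u => (hγderiv u).continuousAt
  have hφ'meas : Measurable φ' := by
    have : φ' = deriv φ := funext fun u => ((hφderiv u).deriv).symm
    rw [this]; exact measurable_deriv φ
  set B : ℝ → ℝ := fun u => ω (γ u) (φ' u) with hBdef
  have hBmeas : Measurable B := by
    have h1 : Continuous fun p : X × X => Bc p.1 p.2 := Bc.continuous₂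
    have h2 : Measurable fun u => (γ u, φ' u) := hγcont.measurable.prodMk hφ'meas
    have := h1.measurable.comp h2
    simp only [hBcapp] at this; exact this
  -- B is bounded on [0, L]
  obtain ⟨C, hC⟩ : ∃ C, ∀ x ∈ Icc (0:ℝ) L, ‖γ x‖ ≤ C :=
    (isCompact_Icc.exists_bound_of_continuousOn hγcont.continuousOn)
  set K : ℝ := ‖Bc‖ * C with hK
  have hBbound : ∀ x ∈ Icc (0:ℝ) L, |B x| ≤ K := by
    intro x hx
    have h1 : ‖Bc (γ x) (φ' x)‖ ≤ ‖Bc‖ * ‖γ x‖ * ‖φ' x‖ := Bc.le_opNorm₂ _ _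
    rw [hφspeed, mul_one] at h1
    have h2 : ‖Bc‖ * ‖γ x‖ ≤ ‖Bc‖ * C := by
      have := hC x hx
      have hBn : (0:ℝ) ≤ ‖Bc‖ := norm_nonneg Bc
      nlinarith [norm_nonneg (γ x)]
    calc |B x| = ‖Bc (γ x) (φ' x)‖ := by rw [hBcapp]; rfl
      _ ≤ K := h1.trans h2
  -- B is interval integrable
  have hBint : IntervalIntegrable B volume 0 L := by
    rw [intervalIntegrable_iff_integrableOn_Icc_of_le hL.le]
    refine Integrable.mono' (g := fun _ => K)
      (integrableOn_const (C := K) measure_Icc_lt_top.ne) ?_ ?_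
    · exact hBmeas.aestronglyMeasurable.restrict
    · exact (ae_restrict_iff' measurableSet_Icc).2 (ae_of_all _ fun x hx => by
        simpa [Real.norm_eq_abs] using hBbound x hx)
  -- derivative of G u = ω (γ u) (φ u)
  set G : ℝ → ℝ := fun u => ω (γ u) (φ u) with hGdef
  have hG : ∀ u, HasDerivAt G (B u - f u) u := by
    intro u
    have h1 : HasDerivAt (fun t => Bc (γ t)) (Bc (γ' u)) u :=
      Bc.hasFDerivAt.comp_hasDerivAt u (hγderiv u)
    have h2 := h1.clm_apply (hφderiv u)
    have h3 : ω (γ' u) (φ u) = - f u := by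
      rw [htang, _root_.map_smul]
      simp only [LinearMap.smul_apply, smul_eq_mul]
      rw [hanti (φ' u) (φ u), hRadonNormalized]; ring
    have h4 : Bc (γ' u) (φ u) + Bc (γ u) (φ' u) = B u - f u := by
      rw [hBcapp, hBcapp, h3, hBdef]; ring
    rw [h4] at h2
    have : G = fun t => Bc (γ t) (φ t) := by funext t; rw [hGdef, hBcapp]
    rw [this]
    exact h2
  -- monotone trick: F u = K * u - G u has nonnegative derivative on (0, L)
  have hF : ∀ u, HasDerivAt (fun u => K * u - G u) (K - (B u - f u)) u := by
    intro u
    exact ((hasDerivAt_id u).const_mul K).sub (hG u) |>.congr_deriv (by ring)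
  have hFcont : Continuous fun u => K * u - G u :=
    continuous_iff_continuousAt.2 fun u => (hF u).continuousAt
  have hFint : IntervalIntegrable (fun u => K - (B u - f u)) volume 0 L := by
    apply intervalIntegrable_deriv_of_nonneg hFcont.continuousOn
    · intro x _; exact hF x
    · intro x hx
      rw [min_eq_left hL.le, max_eq_right hL.le] at hx
      have h1 : B x ≤ K := (le_abs_self _).trans (hBbound x (Ioo_subset_Icc_self hx))
      have := (hf x)
      linarith
  -- hence f is interval integrable
  have hfint : IntervalIntegrable f volume 0 L := by
    have : f = fun u => (K - (B u - f u)) - (K - B u) := by funext u; ring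
    rw [this]
    exact hFint.sub (intervalIntegrable_const.sub hBint)
  have hG'int : IntervalIntegrable (fun u => B u - f u) volume 0 L := hBint.sub hfint
  -- FTC over one period
  have hFTC : (∫ u in (0:ℝ)..L, (B u - f u)) = G L - G 0 :=
    intervalIntegral.integral_eq_sub_of_hasDerivAt (fun x _ => hG x) hG'int
  have hper : G L - G 0 = 0 := by
    have h1 : γ L = γ 0 := by simpa using hγper 0
    have h2 : φ L = φ 0 := by simpa using hφper 0
    rw [hGdef]; simp [h1, h2]
  have hsub : (∫ u in (0:ℝ)..L, (B u - f u)) = (∫ u in (0:ℝ)..L, B u) - ∫ u in (0:ℝ)..L, f u :=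
    intervalIntegral.integral_sub hBint hfint
  have hmain : (∫ u in (0:ℝ)..L, f u) = ∫ u in (0:ℝ)..L, B u := by
    rw [hFTC, hper] at hsub; linarith
  calc (∫ u in (0:ℝ)..L, ‖γ' u‖) = ∫ u in (0:ℝ)..L, f u :=
        intervalIntegral.integral_congr fun u _ => hnorm u
    _ = ∫ u in (0:ℝ)..L, B u := hmain
    _ = ∫ u in (0:ℝ)..L, ω (γ u) (φ' u) := rfl
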